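/- (q = 1 case: a generalized Spivey formula of Hsu–Shiue type.) For all real α, β, ρ, x, all natural numbers n, and every natural number m ≥ 1: B_{n+m;x}(α,β,ρ) = Σ_{r=0}^{n} Σ_{j=0}^{m} S_{m,j}(α,β,ρ) · C(n,r) · x^j · B_{r;x}(α,β,0) · Π_{i=0}^{n−r−1} (βj − ρ − α(m+i)), where C(n,r) is the ordinary binomial coefficient. -/

import Mathlib

/-- The generalized Stirling numbers `S_{n,k}(α,β,ρ)` of Hsu–Shiue type. -/
noncomputable def hsStirling (α β ρ : ℝ) : ℕ → ℕ → ℝ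
  | 0, 0 => 1
  | 0, _ + 1 => 0
  | _ + 1, 0 => 0
  | n + 1, k + 1 =>
    if k + 1 ≤ n + 1 then
      hsStirling α β ρ n k
        + (((k : ℝ) + 1) * β - (n : ℝ) * α - ρ) * hsStirling α β ρ n (k + 1)
    else 0

/-- The generalized Bell polynomial `B_{n;x}(α,β,ρ)`. -/
noncomputable def hsBell (α β ρ : ℝ) (n : ℕ) (x : ℝ) : ℝ :=
  ∑ k ∈ Finset.range (n + 1), hsStirling α β ρ n k * x ^ k

lemma hs1 (α β ρ : ℝ) (k : ℕ) : hsStirling α β ρ 0 (k+1) = 0 := by simp [hsStirling]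
lemma hs2 (α β ρ : ℝ) (n : ℕ) : hsStirling α β ρ (n+1) 0 = 0 := by simp [hsStirling]
lemma hs0 (α β ρ : ℝ) : hsStirling α β ρ 0 0 = 1 := by simp [hsStirling]
lemma hs3 (α β ρ : ℝ) (n k : ℕ) (h : k ≤ n) :
    hsStirling α β ρ (n+1) (k+1)
      = hsStirling α β ρ n k + (((k:ℝ)+1)*β - (n:ℝ)*α - ρ) * hsStirling α β ρ n (k+1) := by
  rw [hsStirling, if_pos (by omega)]
lemma hs4 (α β ρ : ℝ) : ∀ n k, n < k → hsStirling α β ρ n k = 0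
  | 0, k+1, _ => hs1 α β ρ k
  | n+1, k+1, h => by rw [hsStirling, if_neg (by omega)]

open Polynomial Finset

noncomputable def polyBell (α β ρ : ℝ) (n : ℕ) : Polynomial ℝ :=
  ∑ k ∈ Finset.range (n + 1), C (hsStirling α β ρ n k) * X ^ k

lemma Xderiv (a : ℝ) (k : ℕ) :
    X * derivative (C a * X ^ k) = C ((k:ℝ) * a) * X ^ k := by
  cases k with
  | zero => simp
  | succ k =>
    rw [derivative_C_mul, derivative_X_pow]
    push_cast
    simp only [C_add, C_mul, C_1, Nat.add_sub_cancel, pow_succ]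
    ring

lemma X_mul_deriv (α β ρ : ℝ) (n : ℕ) :
    X * derivative (polyBell α β ρ n)
      = ∑ k ∈ Finset.range (n + 1), C ((k:ℝ) * hsStirling α β ρ n k) * X ^ k := by
  rw [polyBell, map_sum, Finset.mul_sum]
  exact Finset.sum_congr rfl fun k _ => Xderiv _ k

lemma polyBell_succ (α β ρ : ℝ) (n : ℕ) (h : ρ = 0 ∨ 1 ≤ n) :
    polyBell α β ρ (n+1)
      = X * polyBell α β ρ n + C β * (X * derivative (polyBell α β ρ n))
        - C ((n:ℝ)*α + ρ) * polyBell α β ρ n := by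
  have hz : ((0:ℝ) - (n:ℝ)*α - ρ) * hsStirling α β ρ n 0 = 0 := by
    rcases n with _ | n
    · rcases h with h | h
      · simp [h]
      · omega
    · simp [hs2]
  have key1 : polyBell α β ρ (n+1)
      = (∑ k ∈ range (n+1), C (hsStirling α β ρ n k) * X^(k+1))
        + ∑ k ∈ range (n+1), C ((((k:ℝ)+1)*β - (n:ℝ)*α - ρ) * hsStirling α β ρ n (k+1)) * X^(k+1) := by
    rw [polyBell, Finset.sum_range_succ' _ (n+1), hs2]
    simp only [map_zero, zero_mul, add_zero]
    rw [← Finset.sum_add_distrib]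
    refine Finset.sum_congr rfl fun k hk => ?_
    rw [hs3 α β ρ n k (by have := Finset.mem_range.mp hk; omega), C_add, add_mul, C_mul]
  have key2 : X * polyBell α β ρ n
      = ∑ k ∈ range (n+1), C (hsStirling α β ρ n k) * X^(k+1) := by
    rw [polyBell, Finset.mul_sum]
    refine Finset.sum_congr rfl fun k _ => ?_
    rw [pow_succ]; ring
  have key3 : C β * (X * derivative (polyBell α β ρ n)) - C ((n:ℝ)*α + ρ) * polyBell α β ρ n
      = ∑ k ∈ range (n+1), C (((k:ℝ)*β - (n:ℝ)*α - ρ) * hsStirling α β ρ n k) * X^k := by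
    rw [X_mul_deriv, polyBell, Finset.mul_sum, Finset.mul_sum, ← Finset.sum_sub_distrib]
    refine Finset.sum_congr rfl fun k _ => ?_
    rw [← mul_assoc, ← mul_assoc, ← C_mul, ← C_mul, ← sub_mul, ← C_sub]
    have : β * ((k:ℝ) * hsStirling α β ρ n k) - ((n:ℝ)*α + ρ) * hsStirling α β ρ n k
        = ((k:ℝ)*β - (n:ℝ)*α - ρ) * hsStirling α β ρ n k := by ring
    rw [this]
  have key4 : ∑ k ∈ range (n+1), C (((k:ℝ)*β - (n:ℝ)*α - ρ) * hsStirling α β ρ n k) * X^k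
      = ∑ k ∈ range (n+1), C ((((k:ℝ)+1)*β - (n:ℝ)*α - ρ) * hsStirling α β ρ n (k+1)) * X^(k+1) := by
    rw [Finset.sum_range_succ' (fun k => C (((k:ℝ)*β - (n:ℝ)*α - ρ) * hsStirling α β ρ n k) * X^k) n]
    simp only [Nat.cast_zero, zero_mul, hz, map_zero, add_zero, pow_zero, mul_one]
    rw [Finset.sum_range_succ (fun k => C ((((k:ℝ)+1)*β - (n:ℝ)*α - ρ) * hsStirling α β ρ n (k+1)) * X^(k+1)) n, hs4 α β ρ n (n+1) (by omega), mul_zero, map_zero, zero_mul, add_zero]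
    apply Finset.sum_congr rfl
    intro k hk
    push_cast
    ring_nf
  rw [add_sub_assoc, key3, key1, key2, key4]

noncomputable def Hterm (α β ρ : ℝ) (m c p r : ℕ) : Polynomial ℝ :=
  ∑ j ∈ Finset.range (m+1),
    C (hsStirling α β ρ m j * (c:ℝ)
        * ∏ i ∈ Finset.range p, (β*(j:ℝ) - ρ - α*((m:ℝ)+(i:ℝ)))) * X^j * polyBell α β 0 r

lemma Hsplit (α β ρ : ℝ) (m c1 c2 p r : ℕ) :
    Hterm α β ρ m (c1+c2) p r = Hterm α β ρ m c1 p r + Hterm α β ρ m c2 p r := by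
  rw [Hterm, Hterm, Hterm, ← Finset.sum_add_distrib]
  refine Finset.sum_congr rfl fun j _ => ?_
  have h : ∀ st pr : ℝ, st * ((c1:ℝ)+(c2:ℝ)) * pr = st*(c1:ℝ)*pr + st*(c2:ℝ)*pr := by
    intros; ring
  rw [Nat.cast_add, h, C_add, add_mul, add_mul]

lemma Hzero (α β ρ : ℝ) (m p r : ℕ) : Hterm α β ρ m 0 p r = 0 := by
  simp [Hterm]

lemma keylemma (α β ρ : ℝ) (m : ℕ) (hm : 1 ≤ m) : ∀ n : ℕ,
    polyBell α β ρ (n + m)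
      = ∑ r ∈ Finset.range (n+1), Hterm α β ρ m (n.choose r) (n-r) r
  | 0 => by
      have h00 : polyBell α β 0 0 = 1 := by simp [polyBell, hs0]
      rw [Finset.sum_range_one, Hterm, zero_add]
      simp only [h00, mul_one, Nat.choose_self, Nat.cast_one, Nat.sub_self, Finset.range_zero,
        Finset.prod_empty]
      rw [polyBell]
  | (n+1) => by
      have IH := keylemma α β ρ m hm n
      have hstep : (n + 1 + m) = ((n+m)+1) := by omega
      rw [hstep, polyBell_succ α β ρ (n+m) (Or.inr (by omega)), IH]
      have hXj : ∀ j : ℕ, X * derivative ((X : Polynomial ℝ) ^ j) = C (j:ℝ) * X ^ j := by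
        intro j
        have := Xderiv (1:ℝ) j
        simpa using this
      trans (∑ r ∈ Finset.range (n+1),
          (Hterm α β ρ m (n.choose r) (n-r) (r+1) + Hterm α β ρ m (n.choose r) ((n-r)+1) r))
      · simp only [Hterm, map_sum, Finset.mul_sum, ← Finset.sum_add_distrib,
          ← Finset.sum_sub_distrib]
        refine Finset.sum_congr rfl fun r hr => Finset.sum_congr rfl fun j hj => ?_
        have hr' : r ≤ n := by have := Finset.mem_range.mp hr; omega
        have hd : C β * (X * derivative (polyBell α β 0 r))
            = polyBell α β 0 (r+1) - X * polyBell α β 0 r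
              + (C (r:ℝ) * C α) * polyBell α β 0 r := by
          rw [polyBell_succ α β 0 r (Or.inl rfl), add_zero, C_mul]; ring
        rw [Finset.prod_range_succ, derivative_mul, derivative_mul, derivative_C, zero_mul,
          zero_add, Nat.cast_sub hr']
        push_cast
        simp only [map_mul, map_add, map_sub]
        linear_combination
          (C β * (C (hsStirling α β ρ m j) * C ((n.choose r : ℝ))
            * C (∏ i ∈ Finset.range (n - r), (β*(j:ℝ) - ρ - α*((m:ℝ)+(i:ℝ))))) * polyBell α β 0 r) * hXj j
          + ((C (hsStirling α β ρ m j) * C ((n.choose r : ℝ))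
            * C (∏ i ∈ Finset.range (n - r), (β*(j:ℝ) - ρ - α*((m:ℝ)+(i:ℝ)))) * X^j)) * hd
      · simp only [Finset.sum_add_distrib]
        have hT2 : ∑ r ∈ Finset.range (n+1), Hterm α β ρ m (n.choose r) ((n-r)+1) r
            = ∑ r ∈ Finset.range (n+1), Hterm α β ρ m (n.choose r) (n+1-r) r :=
          Finset.sum_congr rfl fun r hr => by
            rw [show (n-r)+1 = n+1-r from by have := Finset.mem_range.mp hr; omega]
        rw [hT2]
        rw [Finset.sum_range_succ' (fun r => Hterm α β ρ m ((n+1).choose r) (n+1-r) r) (n+1)]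
        have hg : ∑ r ∈ Finset.range (n+1), Hterm α β ρ m ((n+1).choose (r+1)) (n+1-(r+1)) (r+1)
            = ∑ r ∈ Finset.range (n+1),
                (Hterm α β ρ m (n.choose r) (n-r) (r+1)
                  + Hterm α β ρ m (n.choose (r+1)) (n+1-(r+1)) (r+1)) :=
          Finset.sum_congr rfl fun r hr => by
            rw [Nat.choose_succ_succ, Hsplit,
              show n+1-(r+1) = n-r from by have := Finset.mem_range.mp hr; omega]
        rw [hg, Finset.sum_add_distrib, add_assoc]
        rw [add_right_inj]
        rw [show (n+1).choose 0 = n.choose 0 from by simp,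
          ← Finset.sum_range_succ' (fun r => Hterm α β ρ m (n.choose r) (n+1-r) r) (n+1),
          Finset.sum_range_succ (fun r => Hterm α β ρ m (n.choose r) (n+1-r) r) (n+1),
          Nat.choose_succ_self, Hzero, add_zero]

/-- A generalized Spivey formula of Hsu–Shiue type (the `q = 1` case). -/
theorem spivey_hsu_shiue (α β ρ x : ℝ) (n m : ℕ) (hm : 1 ≤ m) :
    hsBell α β ρ (n + m) x
    = ∑ r ∈ Finset.range (n + 1), ∑ j ∈ Finset.range (m + 1),
        hsStirling α β ρ m j * (n.choose r : ℝ) * x ^ j * hsBell α β 0 r x *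
          ∏ i ∈ Finset.range (n - r), (β * (j : ℝ) - ρ - α * ((m : ℝ) + (i : ℝ))) := by
  have hev : ∀ (ρ' : ℝ) (N : ℕ), hsBell α β ρ' N x = (polyBell α β ρ' N).eval x := by
    intro ρ' N
    rw [hsBell, polyBell, Polynomial.eval_finset_sum]
    simp
  rw [hev ρ (n+m), keylemma α β ρ m hm n, Polynomial.eval_finset_sum]
  refine Finset.sum_congr rfl fun r hr => ?_
  rw [Hterm, Polynomial.eval_finset_sum]
  refine Finset.sum_congr rfl fun j hj => ?_
  rw [Polynomial.eval_mul, Polynomial.eval_mul, Polynomial.eval_C, Polynomial.eval_pow,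
    Polynomial.eval_X, ← hev 0 r]
  ring
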